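/- For every n ≥ 4, the real vector space of linear maps T : ℝ^{n×n} → ℝ^{n×n} satisfying T(σ·X) = σ·T(X) for all σ ∈ S_n and all X ∈ ℝ^{n×n} has dimension exactly 15. -/

import Mathlib

open Matrix

namespace IGN2

variable (n : ℕ)

/-- The action of `Sₙ` on `n × n` matrices: `(σ · X) i j = X (σ⁻¹ i) (σ⁻¹ j)`. -/
def act (σ : Equiv.Perm (Fin n)) (X : Matrix (Fin n) (Fin n) ℝ) :
    Matrix (Fin n) (Fin n) ℝ :=
  Matrix.of fun i j => X (σ⁻¹ i) (σ⁻¹ j)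

theorem act_add (σ : Equiv.Perm (Fin n)) (X Y : Matrix (Fin n) (Fin n) ℝ) :
    act n σ (X + Y) = act n σ X + act n σ Y := by
  ext i j; simp [act]

theorem act_smul (σ : Equiv.Perm (Fin n)) (c : ℝ) (X : Matrix (Fin n) (Fin n) ℝ) :
    act n σ (c • X) = c • act n σ X := by
  ext i j; simp [act]

/-- The space of `Sₙ`-equivariant linear endomorphisms of `ℝⁿˣⁿ`. -/
noncomputable def EquivariantMaps :
    Submodule ℝ (Matrix (Fin n) (Fin n) ℝ →ₗ[ℝ] Matrix (Fin n) (Fin n) ℝ) where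
  carrier := {T | ∀ (σ : Equiv.Perm (Fin n)) (X : Matrix (Fin n) (Fin n) ℝ),
    T (act n σ X) = act n σ (T X)}
  zero_mem' := by
    intro σ X
    simp only [LinearMap.zero_apply]
    ext i j; simp [act]
  add_mem' := by
    intro T T' hT hT' σ X
    simp [LinearMap.add_apply, hT σ X, hT' σ X, act_add]
  smul_mem' := by
    intro c T hT σ X
    simp [LinearMap.smul_apply, hT σ X, act_smul]




/-- first occurrence position of the value `t i`. -/
def first {n : ℕ} (t : Fin 4 → Fin n) (i : Fin 4) : Fin 4 :=
  (Finset.univ.filter (fun j => t j = t i)).min' ⟨i, by simp⟩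

lemma apply_first {n : ℕ} (t : Fin 4 → Fin n) (i : Fin 4) : t (first t i) = t i := by
  have h := Finset.min'_mem (Finset.univ.filter (fun j => t j = t i)) ⟨i, by simp⟩
  simpa [first] using h

lemma first_le {n : ℕ} (t : Fin 4 → Fin n) (i : Fin 4) : first t i ≤ i :=
  Finset.min'_le _ _ (by simp)

lemma first_congr {n : ℕ} (t : Fin 4 → Fin n) {i j : Fin 4} (h : t i = t j) :
    first t i = first t j := by
  unfold first
  congr 1
  ext k
  simp [h]

lemma first_idem {n : ℕ} (t : Fin 4 → Fin n) (i : Fin 4) :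
    first t (first t i) = first t i := by
  exact first_congr t (apply_first t i)

def nval {n : ℕ} (t : Fin 4 → Fin n) (i : Fin 4) : ℕ :=
  ((Finset.Iio (first t i)).image (first t)).card

lemma nval_lt {n : ℕ} (t : Fin 4 → Fin n) (i : Fin 4) : nval t i < 4 := by
  unfold nval
  have h1 : ((Finset.Iio (first t i)).image (first t)).card ≤ (Finset.Iio (first t i)).card :=
    Finset.card_image_le
  have h2 : (Finset.Iio (first t i)).card = (first t i : ℕ) := Fin.card_Iio _
  have : (first t i : ℕ) < 4 := (first t i).isLt
  omega

def nf {n : ℕ} (t : Fin 4 → Fin n) (i : Fin 4) : Fin 4 := ⟨nval t i, nval_lt t i⟩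

/-- `first` depends only on the equality pattern. -/
lemma first_pattern {m n : ℕ} (s : Fin 4 → Fin m) (t : Fin 4 → Fin n)
    (h : ∀ i j, s i = s j ↔ t i = t j) : first s = first t := by
  funext i
  unfold first
  congr 1
  ext k
  simp [h]

lemma nf_pattern {m n : ℕ} (s : Fin 4 → Fin m) (t : Fin 4 → Fin n)
    (h : ∀ i j, s i = s j ↔ t i = t j) : nf s = nf t := by
  funext i
  have hf := first_pattern s t h
  simp [nf, nval, hf]

lemma nval_mono {n : ℕ} (t : Fin 4 → Fin n) {i j : Fin 4}
    (h : first t i < first t j) : nval t i < nval t j := by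
  apply Finset.card_lt_card
  constructor
  · apply Finset.image_subset_image
    intro x hx
    simp only [Finset.mem_Iio] at hx ⊢
    exact lt_trans hx h
  · intro hsub
    have hmem : first t i ∈ (Finset.Iio (first t j)).image (first t) := by
      refine Finset.mem_image.2 ⟨first t i, by simp [h], first_idem t i⟩
    have := hsub hmem
    rcases Finset.mem_image.1 this with ⟨k, hk, hk2⟩
    simp only [Finset.mem_Iio] at hk
    have : first t k ≤ k := first_le t k
    rw [hk2] at this
    exact absurd (lt_of_le_of_lt this hk) (lt_irrefl _)

/-- key: the normal form has the same equality pattern. -/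
lemma nf_eq_iff {n : ℕ} (t : Fin 4 → Fin n) (i j : Fin 4) :
    nf t i = nf t j ↔ t i = t j := by
  constructor
  · intro h
    by_contra hne
    have hfne : first t i ≠ first t j := by
      intro he
      apply hne
      rw [← apply_first t i, he, apply_first t j]
    rcases lt_or_gt_of_ne hfne with hlt | hgt
    · have := nval_mono t hlt
      simp only [nf, Fin.mk.injEq] at h
      omega
    · have := nval_mono t hgt
      simp only [nf, Fin.mk.injEq] at h
      omega
  · intro h
    simp [nf, nval, first_congr t h]

lemma nf_idem {n : ℕ} (t : Fin 4 → Fin n) : nf (nf t) = nf t :=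
  nf_pattern _ _ (fun i j => nf_eq_iff t i j)

lemma nf_comp_perm {n : ℕ} (σ : Equiv.Perm (Fin n)) (t : Fin 4 → Fin n) :
    nf (σ ∘ t) = nf t :=
  nf_pattern _ _ (fun i j => by simp)

lemma nf_comp_inj {m n : ℕ} (ι : Fin m → Fin n) (hι : Function.Injective ι)
    (t : Fin 4 → Fin m) : nf (ι ∘ t) = nf t :=
  nf_pattern _ _ (fun i j => by simp [hι.eq_iff])

/-- same pattern ⇒ related by a permutation. -/
lemma exists_perm {n : ℕ} (s t : Fin 4 → Fin n)
    (h : ∀ i j, s i = s j ↔ t i = t j) : ∃ σ : Equiv.Perm (Fin n), ∀ i, σ (s i) = t i := by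
  classical
  have key1 : ∀ (x : Fin n) (hx : ∃ i, s i = x) (h2 : ∃ i, t i = t (Classical.choose hx)),
      s (Classical.choose h2) = x := by
    intro x hx h2
    have h3 : t (Classical.choose h2) = t (Classical.choose hx) := Classical.choose_spec h2
    have h4 : s (Classical.choose h2) = s (Classical.choose hx) := (h _ _).2 h3
    rw [h4, Classical.choose_spec hx]
  have key2 : ∀ (x : Fin n) (hx : ∃ i, t i = x) (h2 : ∃ i, s i = s (Classical.choose hx)),
      t (Classical.choose h2) = x := by
    intro x hx h2
    have h3 : s (Classical.choose h2) = s (Classical.choose hx) := Classical.choose_spec h2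
    have h4 : t (Classical.choose h2) = t (Classical.choose hx) := (h _ _).1 h3
    rw [h4, Classical.choose_spec hx]
  let e : {x // ∃ i, s i = x} ≃ {x // ∃ i, t i = x} :=
    { toFun := fun x => ⟨t (Classical.choose x.2), _, rfl⟩
      invFun := fun x => ⟨s (Classical.choose x.2), _, rfl⟩
      left_inv := fun x => Subtype.ext (key1 x.1 x.2 _)
      right_inv := fun x => Subtype.ext (key2 x.1 x.2 _) }
  refine ⟨e.extendSubtype, fun i => ?_⟩
  have hpi : ∃ j, s j = s i := ⟨i, rfl⟩
  rw [Equiv.extendSubtype_apply_of_mem e _ hpi]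
  show t (Classical.choose hpi) = t i
  exact (h _ _).1 (Classical.choose_spec hpi)


-- ### linear algebra part

lemma act_stdBasisMatrix (σ : Equiv.Perm (Fin n)) (k l : Fin n) :
    act n σ (Matrix.single k l (1:ℝ)) = Matrix.single (σ k) (σ l) 1 := by
  ext i j
  simp only [act, Matrix.of_apply, Matrix.single]
  congr 1
  rw [eq_iff_iff]
  constructor <;> rintro ⟨rfl, rfl⟩ <;> simp

lemma comp_vec {α β : Type*} (g : α → β) (a b c d : α) :
    g ∘ ![a, b, c, d] = ![g a, g b, g c, g d] := by
  funext i; fin_cases i <;> rfl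

lemma vec_eta {α : Type*} (t : Fin 4 → α) : ![t 0, t 1, t 2, t 3] = t := by
  funext i; fin_cases i <;> rfl

/-- invariant functions on 4-tuples -/
def Inv : Submodule ℝ ((Fin 4 → Fin n) → ℝ) where
  carrier := {f | ∀ (σ : Equiv.Perm (Fin n)) (t : Fin 4 → Fin n), f (σ ∘ t) = f t}
  zero_mem' := by intro σ t; rfl
  add_mem' := by intro f g hf hg σ t; simp [hf σ t, hg σ t]
  smul_mem' := by intro c f hf σ t; simp [hf σ t]

noncomputable def Psi :
    (Matrix (Fin n) (Fin n) ℝ →ₗ[ℝ] Matrix (Fin n) (Fin n) ℝ) →ₗ[ℝ]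
      ((Fin 4 → Fin n) → ℝ) where
  toFun T := fun t => (T (Matrix.single (t 2) (t 3) 1)) (t 0) (t 1)
  map_add' T T' := by funext t; simp
  map_smul' c T := by funext t; simp

lemma Psi_injective : Function.Injective (Psi n) := by
  intro T T' h
  apply Module.Basis.ext (Matrix.stdBasis ℝ (Fin n) (Fin n))
  rintro ⟨k, l⟩
  rw [Matrix.stdBasis_eq_single]
  ext i j
  have := congrFun h (![i, j, k, l])
  simpa [Psi] using this

lemma Psi_mem_Inv {T : Matrix (Fin n) (Fin n) ℝ →ₗ[ℝ] Matrix (Fin n) (Fin n) ℝ}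
    (hT : T ∈ EquivariantMaps n) : Psi n T ∈ Inv n := by
  intro σ t
  show (T (Matrix.single (σ (t 2)) (σ (t 3)) 1)) (σ (t 0)) (σ (t 1)) = _
  rw [← act_stdBasisMatrix, hT σ]
  simp [act]
  rfl

/-- reconstruction of the linear map from an invariant function -/
noncomputable def Tmap (f : (Fin 4 → Fin n) → ℝ) :
    Matrix (Fin n) (Fin n) ℝ →ₗ[ℝ] Matrix (Fin n) (Fin n) ℝ where
  toFun X := Matrix.of fun i j => ∑ k, ∑ l, f ![i, j, k, l] * X k l
  map_add' X Y := by
    ext i j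
    simp [Matrix.add_apply, mul_add, Finset.sum_add_distrib]
  map_smul' c X := by
    ext i j
    simp [Matrix.smul_apply, Finset.mul_sum, mul_left_comm]

lemma Tmap_mem (f : (Fin 4 → Fin n) → ℝ) (hf : f ∈ Inv n) :
    Tmap n f ∈ EquivariantMaps n := by
  intro σ X
  ext i j
  show (∑ k, ∑ l, f ![i, j, k, l] * X (σ⁻¹ k) (σ⁻¹ l)) =
    ∑ k, ∑ l, f ![σ⁻¹ i, σ⁻¹ j, k, l] * X k l
  rw [← Equiv.sum_comp σ (fun k => ∑ l, f ![i, j, k, l] * X (σ⁻¹ k) (σ⁻¹ l))]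
  apply Finset.sum_congr rfl
  intro k _
  rw [← Equiv.sum_comp σ (fun l => f ![i, j, σ k, l] * X (σ⁻¹ (σ k)) (σ⁻¹ l))]
  apply Finset.sum_congr rfl
  intro l _
  simp only [Equiv.Perm.inv_def, Equiv.symm_apply_apply]
  congr 1
  have := hf σ ![σ⁻¹ i, σ⁻¹ j, k, l]
  rw [comp_vec] at this
  simp only [Equiv.Perm.inv_def, Equiv.apply_symm_apply] at this
  exact this

lemma Psi_Tmap (f : (Fin 4 → Fin n) → ℝ) : Psi n (Tmap n f) = f := by
  funext t
  show (∑ k, ∑ l, f ![t 0, t 1, k, l] * Matrix.single (t 2) (t 3) (1:ℝ) k l) = f t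
  have : ∀ k l, Matrix.single (t 2) (t 3) (1:ℝ) k l
      = if t 2 = k ∧ t 3 = l then 1 else 0 := by
    intro k l; rfl
  simp only [this, mul_ite, mul_one, mul_zero]
  rw [Finset.sum_eq_single (t 2)]
  · rw [Finset.sum_eq_single (t 3)]
    · simp [vec_eta]
    · intro b _ hb; simp [Ne.symm hb]
    · simp
  · intro b _ hb
    apply Finset.sum_eq_zero
    intro l _
    simp [Ne.symm hb]
  · simp

noncomputable def PsiRes : EquivariantMaps n →ₗ[ℝ] Inv n :=
  ((Psi n).domRestrict (EquivariantMaps n)).codRestrict (Inv n)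
    (fun T => Psi_mem_Inv n T.2)

lemma PsiRes_bijective : Function.Bijective (PsiRes n) := by
  constructor
  · intro T T' h
    apply Subtype.ext
    apply Psi_injective n
    have := congrArg Subtype.val h
    exact this
  · rintro ⟨f, hf⟩
    exact ⟨⟨Tmap n f, Tmap_mem n f hf⟩, Subtype.ext (Psi_Tmap n f)⟩


-- ### Part B : invariant functions ≃ functions on normal forms

noncomputable def Phi (hn : 4 ≤ n) :
    Inv n →ₗ[ℝ] ({r : Fin 4 → Fin 4 // nf r = r} → ℝ) where
  toFun f := fun r => f.1 (Fin.castLE hn ∘ r.1)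
  map_add' f g := rfl
  map_smul' c f := rfl

lemma Phi_injective (hn : 4 ≤ n) : Function.Injective (Phi n hn) := by
  intro f g h
  apply Subtype.ext
  funext t
  obtain ⟨σ, hσ⟩ := exists_perm (Fin.castLE hn ∘ nf t) t (by
    intro i j
    simp only [Function.comp_apply]
    rw [(Fin.castLE_injective hn).eq_iff]
    exact nf_eq_iff t i j)
  have hcomp : σ ∘ (Fin.castLE hn ∘ nf t) = t := funext hσ
  have h1 : f.1 t = f.1 (Fin.castLE hn ∘ nf t) := by
    conv_lhs => rw [← hcomp]
    exact f.2 σ _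
  have h2 : g.1 t = g.1 (Fin.castLE hn ∘ nf t) := by
    conv_lhs => rw [← hcomp]
    exact g.2 σ _
  have := congrFun h ⟨nf t, nf_idem t⟩
  simp only [Phi] at this
  rw [h1, h2]
  exact this

lemma Phi_surjective (hn : 4 ≤ n) : Function.Surjective (Phi n hn) := by
  intro g
  refine ⟨⟨fun t => g ⟨nf t, nf_idem t⟩, ?_⟩, ?_⟩
  · intro σ t
    exact congrArg g (Subtype.ext (nf_comp_perm σ t))
  · funext r
    show g ⟨nf (Fin.castLE hn ∘ r.1), _⟩ = g r
    congr 1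
    apply Subtype.ext
    show nf (Fin.castLE hn ∘ r.1) = r.1
    rw [nf_comp_inj (Fin.castLE hn) (Fin.castLE_injective hn) r.1]
    exact r.2

lemma card_normal : Fintype.card {r : Fin 4 → Fin 4 // nf r = r} = 15 := by
  rw [Fintype.card_subtype]
  decide

/-- For `n ≥ 4`, the space of `Sₙ`-equivariant linear
endomorphisms of `ℝⁿˣⁿ` has dimension exactly 15. -/
theorem finrank_equivariantMaps_eq_fifteen (hn : 4 ≤ n) :
    Module.finrank ℝ (EquivariantMaps n) = 15 := by
  have e1 : (EquivariantMaps n) ≃ₗ[ℝ] (Inv n) :=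
    LinearEquiv.ofBijective (PsiRes n) (PsiRes_bijective n)
  have e2 : (Inv n) ≃ₗ[ℝ] ({r : Fin 4 → Fin 4 // nf r = r} → ℝ) :=
    LinearEquiv.ofBijective (Phi n hn) ⟨Phi_injective n hn, Phi_surjective n hn⟩
  rw [e1.finrank_eq, e2.finrank_eq, Module.finrank_pi, card_normal]

end IGN2
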